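/- Let n be a natural number, let σ be a real 2n×2n antisymmetric matrix, and let K, D be real 2n×2n matrices with D symmetric. Suppose there exists ε > 0 such that for all t ∈ (0, ε) the complex matrix t·D + i·((I + t·K)·σ·(I + t·K)ᵀ − σ) is positive semidefinite. Then M := D + i·(K·σ + σ·Kᵀ) is positive semidefinite. -/

import Mathlib

open Matrix Complex
open scoped ComplexOrder

private lemma mapC_mul {n : ℕ} (A B : Matrix (Fin (2*n)) (Fin (2*n)) ℝ) :
    (A*B).map (Complex.ofReal) = A.map Complex.ofReal * B.map Complex.ofReal := by
  rw [show (Complex.ofReal : ℝ → ℂ) = ⇑Complex.ofRealHom from rfl, Matrix.map_mul]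

private lemma mapC_conjT {n : ℕ} (A : Matrix (Fin (2*n)) (Fin (2*n)) ℝ) :
    (A.map Complex.ofReal)ᴴ = Aᵀ.map Complex.ofReal := by
  ext i j; simp [conjTranspose_apply, Matrix.map_apply, Complex.conj_ofReal]

/-- Necessity of the generator CP condition: if the HHW CP matrix of the infinitesimal
Gaussian step `X = I + tK`, `Y = tD` is positive semidefinite for all sufficiently small
`t > 0`, then the generator CP matrix `M = D + i(Kσ + σKᵀ)` is positive semidefinite. -/
theorem generator_cp_of_infinitesimal_cp (n : ℕ)
    (σ K D : Matrix (Fin (2 * n)) (Fin (2 * n)) ℝ)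
    (hσ : σᵀ = -σ) (hD : Dᵀ = D)
    (h : ∃ ε > (0 : ℝ), ∀ t : ℝ, 0 < t → t < ε →
      ((t : ℂ) • D.map Complex.ofReal +
        Complex.I • (((1 : Matrix (Fin (2 * n)) (Fin (2 * n)) ℂ)
              + (t : ℂ) • K.map Complex.ofReal)
            * σ.map Complex.ofReal
            * ((1 : Matrix (Fin (2 * n)) (Fin (2 * n)) ℂ)
              + (t : ℂ) • K.map Complex.ofReal)ᵀ
          - σ.map Complex.ofReal)).PosSemidef) :
    (D.map Complex.ofReal +
      Complex.I • (K.map Complex.ofReal * σ.map Complex.ofReal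
        + σ.map Complex.ofReal * (K.map Complex.ofReal)ᵀ)).PosSemidef := by
  obtain ⟨ε, hε, h⟩ := h
  set Kc := K.map Complex.ofReal with hKc
  set σc := σ.map Complex.ofReal with hσc
  set Dc := D.map Complex.ofReal with hDc
  set M : Matrix (Fin (2*n)) (Fin (2*n)) ℂ := Dc + Complex.I • (Kc * σc + σc * Kcᵀ) with hM
  set B : Matrix (Fin (2*n)) (Fin (2*n)) ℂ := Complex.I • (Kc * σc * Kcᵀ) with hB
  have key : ∀ t : ℝ,
      ((t : ℂ) • Dc +
        Complex.I • (((1 : Matrix (Fin (2 * n)) (Fin (2 * n)) ℂ) + (t : ℂ) • Kc)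
            * σc * ((1 : Matrix (Fin (2 * n)) (Fin (2 * n)) ℂ) + (t : ℂ) • Kc)ᵀ - σc))
      = (t : ℂ) • M + ((t:ℂ)^2) • B := by
    intro t
    rw [hM, hB]
    simp only [Matrix.transpose_add, Matrix.transpose_smul, Matrix.transpose_one,
      Matrix.mul_add, Matrix.add_mul, Matrix.one_mul, Matrix.mul_one,
      Matrix.smul_mul, Matrix.mul_smul, smul_add, smul_sub, smul_smul]
    module
  -- Hermitian
  have hNt : (K * σ + σ * Kᵀ)ᵀ = -(K * σ + σ * Kᵀ) := by
    simp [Matrix.transpose_add, Matrix.transpose_mul, hσ, Matrix.neg_mul,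
      Matrix.mul_neg]
  have hNc : Kc * σc + σc * Kcᵀ = (K * σ + σ * Kᵀ).map Complex.ofReal := by
    simp [hKc, hσc, Matrix.map_add, mapC_mul]
    rfl
  have hherm : M.IsHermitian := by
    rw [Matrix.IsHermitian, hM, conjTranspose_add, conjTranspose_smul, hNc, mapC_conjT,
      mapC_conjT, hD, hNt]
    ext i j
    simp [hDc, Matrix.map_apply, Matrix.add_apply, Matrix.neg_apply, Matrix.smul_apply]
    ring
  refine .of_dotProduct_mulVec_nonneg hherm fun x => ?_
  -- quadratic form
  set a : ℂ := star x ⬝ᵥ M *ᵥ x with ha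
  set b : ℂ := star x ⬝ᵥ B *ᵥ x with hb
  have hq : ∀ t : ℝ, 0 < t → t < ε → (0:ℂ) ≤ (t:ℂ) * a + (t:ℂ)^2 * b := by
    intro t ht htε
    have := (h t ht htε).dotProduct_mulVec_nonneg x
    rw [key t] at this
    simpa [Matrix.add_mulVec, Matrix.smul_mulVec, dotProduct_add,
      dotProduct_smul, smul_eq_mul, ha, hb] using this
  have hq' : ∀ t : ℝ, 0 < t → t < ε → 0 ≤ a.re + t * b.re ∧ a.im + t * b.im = 0 := by
    intro t ht htε
    have := hq t ht htε
    rw [Complex.le_def] at this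
    constructor
    · have hre : 0 ≤ t * a.re + t^2 * b.re := by
        have := this.1; simpa [Complex.add_re, Complex.mul_re, Complex.ofReal_re,
          Complex.ofReal_im, pow_two] using this
      nlinarith
    · have him : t * a.im + t^2 * b.im = 0 := by
        have := this.2; simp [Complex.add_im, Complex.mul_im, Complex.ofReal_re,
          Complex.ofReal_im, pow_two] at this
        linarith [this]
      have : t * (a.im + t * b.im) = 0 := by ring_nf; ring_nf at him; linarith
      rcases mul_eq_zero.mp this with h' | h'
      · exact absurd h' (ne_of_gt ht)
      · exact h'
  -- extract im = 0 using two values of t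
  have h1 := hq' (ε/2) (by linarith) (by linarith)
  have h2 := hq' (ε/3) (by linarith) (by linarith)
  have him : a.im = 0 := by
    have e1 := h1.2; have e2 := h2.2
    have hb0 : b.im = 0 := by
      have : (ε/2 - ε/3) * b.im = 0 := by linarith
      have hne : ε/2 - ε/3 ≠ 0 := by intro hc; nlinarith
      exact (mul_eq_zero.mp this).resolve_left hne
    linarith [e1, hb0.symm ▸ e1]
  have hre : 0 ≤ a.re := by
    by_contra hneg
    push_neg at hneg
    set t0 : ℝ := min (ε/2) (-a.re/(2*(|b.re|+1))) with ht0
    have habs : 0 ≤ |b.re| := abs_nonneg _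
    have ht0pos : 0 < t0 := lt_min (by linarith) (div_pos (by linarith) (by positivity))
    have ht0ε : t0 < ε := lt_of_le_of_lt (min_le_left _ _) (by linarith)
    have := (hq' t0 ht0pos ht0ε).1
    have ht0le : t0 ≤ -a.re/(2*(|b.re|+1)) := min_le_right _ _
    have hbb : t0 * b.re ≤ t0 * |b.re| := by
      apply mul_le_mul_of_nonneg_left (le_abs_self _) (le_of_lt ht0pos)
    have : 0 ≤ a.re + t0 * |b.re| := by linarith
    have hfin : t0 * |b.re| ≤ (-a.re/(2*(|b.re|+1))) * |b.re| := by
      apply mul_le_mul_of_nonneg_right ht0le habs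
    have : (-a.re/(2*(|b.re|+1))) * |b.re| < -a.re := by
      rw [div_mul_eq_mul_div, div_lt_iff₀ (by positivity)]
      nlinarith
    linarith
  rw [Complex.le_def]
  constructor
  · simpa using hre
  · simpa using him.symm
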